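/- Let m > 0 and λ < 0 be real numbers, and let h : ℝ → ℝ be a differentiable function satisfying h′(t) = h(t)²/m + λ for every t ∈ ℝ. Then |h(t)| ≤ √(−mλ) for every t ∈ ℝ. -/

import Mathlib

/-- Auxiliary lemma: a global solution can never lie strictly above `√(−mλ)`. -/
lemma riccati_aux (m lam : ℝ) (hm : 0 < m) (hlam : lam < 0)
    (h : ℝ → ℝ) (hdiff : Differentiable ℝ h)
    (hode : ∀ t : ℝ, deriv h t = h t ^ 2 / m + lam)
    (t₀ : ℝ) (hgt : Real.sqrt (-m * lam) < h t₀) : False := by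
  set a := Real.sqrt (-m * lam) with ha_def
  have ha0 : 0 ≤ a := Real.sqrt_nonneg _
  have ha2 : a ^ 2 = -m * lam := Real.sq_sqrt (by nlinarith)
  set d := (a + h t₀) / 2 with hd_def
  have had : a < d := by rw [hd_def]; linarith
  have hdh : d < h t₀ := by rw [hd_def]; linarith
  have hd0 : 0 < d := lt_of_le_of_lt ha0 had
  have hd2 : -m * lam < d ^ 2 := by nlinarith
  -- Step 1: h stays above d for all t ≥ t₀
  have key : ∀ t, t₀ ≤ t → d < h t := by
    by_contra hc
    push_neg at hc
    obtain ⟨t, ht, hht⟩ := hc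
    set S := {s : ℝ | t₀ ≤ s ∧ h s ≤ d} with hS_def
    have hSne : S.Nonempty := ⟨t, ht, hht⟩
    have hSbd : BddBelow S := ⟨t₀, fun s hs => hs.1⟩
    have hScl : IsClosed S := by
      have : S = Set.Ici t₀ ∩ h ⁻¹' Set.Iic d := by
        ext s; simp [hS_def, Set.mem_preimage]
      rw [this]
      exact isClosed_Ici.inter (isClosed_Iic.preimage hdiff.continuous)
    set T := sInf S with hT_def
    have hTS : T ∈ S := hScl.csInf_mem hSne hSbd
    have hT0 : t₀ < T := by
      rcases eq_or_lt_of_le hTS.1 with heq | hlt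
      · exact absurd hTS.2 (by rw [← heq]; linarith)
      · exact hlt
    have hmono : StrictMonoOn h (Set.Icc t₀ T) := by
      apply strictMonoOn_of_deriv_pos (convex_Icc _ _) hdiff.continuous.continuousOn
      intro s hs
      rw [interior_Icc] at hs
      have hsd : d < h s := by
        by_contra hsd
        push_neg at hsd
        have hmem : s ∈ S := ⟨hs.1.le, hsd⟩
        exact absurd (csInf_le hSbd hmem) (not_le.mpr hs.2)
      rw [hode]
      have h1 : d ^ 2 < h s ^ 2 := by nlinarith
      have h2 : -lam < h s ^ 2 / m := by rw [lt_div_iff₀ hm]; nlinarith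
      linarith
    have := hmono ⟨le_refl t₀, hT0.le⟩ ⟨hT0.le, le_refl T⟩ hT0
    linarith [hTS.2]
  -- Step 2: consider g = 1/h which has derivative ≤ -ε, contradiction
  set ε := (d ^ 2 + m * lam) / (m * d ^ 2) with hε_def
  have hεpos : 0 < ε := div_pos (by nlinarith) (by positivity)
  set T := t₀ + (d⁻¹ + 1) / ε with hT_def
  have hTge : t₀ ≤ T := by
    have hp : 0 < (d⁻¹ + 1) / ε := by positivity
    rw [hT_def]; linarith
  set k := fun s : ℝ => (h s)⁻¹ + ε * s with hk_def
  have hkd : ∀ s : ℝ, t₀ ≤ s → HasDerivAt k (-(deriv h s) / h s ^ 2 + ε) s := by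
    intro s hs
    have hne : h s ≠ 0 := ne_of_gt (lt_trans hd0 (key s hs))
    have h1 : HasDerivAt (fun x => (h x)⁻¹) (-(deriv h s) / h s ^ 2) s :=
      (hdiff s).hasDerivAt.inv hne
    have h2 : HasDerivAt (fun x : ℝ => ε * x) ε s := by
      simpa using (hasDerivAt_id s).const_mul ε
    exact h1.add h2
  have hanti : AntitoneOn k (Set.Icc t₀ T) := by
    apply antitoneOn_of_deriv_nonpos (convex_Icc _ _)
    · intro s hs
      exact (hkd s hs.1).continuousAt.continuousWithinAt
    · intro s hs
      rw [interior_Icc] at hs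
      exact (hkd s hs.1.le).differentiableAt.differentiableWithinAt
    · intro s hs
      rw [interior_Icc] at hs
      rw [(hkd s hs.1.le).deriv, hode]
      have hH : d < h s := key s hs.1.le
      have hH0 : 0 < h s := lt_trans hd0 hH
      have hH2 : d ^ 2 < h s ^ 2 := by nlinarith
      have hle : ε ≤ (h s ^ 2 / m + lam) / h s ^ 2 := by
        rw [hε_def, div_le_div_iff₀ (by positivity) (by positivity)]
        have hdm : h s ^ 2 / m * m = h s ^ 2 := div_mul_cancel₀ _ (ne_of_gt hm)
        nlinarith [mul_le_mul_of_nonneg_left hH2.le (le_of_lt (neg_pos.mpr hlam))]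
      rw [neg_div]
      linarith
  have hfin := hanti ⟨le_refl t₀, hTge⟩ ⟨hTge, le_refl T⟩ hTge
  have hεT : ε * T - ε * t₀ = d⁻¹ + 1 := by
    rw [hT_def]; field_simp; ring
  have hinv1 : (h t₀)⁻¹ < d⁻¹ := by
    exact inv_strictAnti₀ hd0 hdh
  have hinv2 : 0 < (h T)⁻¹ := inv_pos.mpr (lt_trans hd0 (key T hTge))
  rw [hk_def] at hfin
  simp only at hfin
  linarith

/-- Any global differentiable solution of `h′ = h²/m + λ` with `m > 0`, `λ < 0` satisfies
`|h(t)| ≤ √(−mλ)` for every `t`. -/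
theorem global_riccati_solution_bounded
    (m lam : ℝ) (hm : 0 < m) (hlam : lam < 0)
    (h : ℝ → ℝ) (hdiff : Differentiable ℝ h)
    (hode : ∀ t : ℝ, deriv h t = h t ^ 2 / m + lam) :
    ∀ t : ℝ, |h t| ≤ Real.sqrt (-m * lam) := by
  intro t
  by_contra hc
  push_neg at hc
  rcases lt_abs.mp hc with h1 | h2
  · exact riccati_aux m lam hm hlam h hdiff hode t h1
  · -- reflect: consider h₂ s = -h (-s), same ODE, with h₂ (-t) > √(-mλ)
    set h₂ := fun s : ℝ => -h (-s) with hh₂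
    have hderiv : ∀ s : ℝ, HasDerivAt h₂ (deriv h (-s)) s := by
      intro s
      have hneg : HasDerivAt (fun x : ℝ => -x) (-1) s := hasDerivAt_neg s
      have hcomp := ((hdiff (-s)).hasDerivAt).comp s hneg
      have hc2 := hcomp.neg
      simp at hc2
      exact hc2
    have hdiff₂ : Differentiable ℝ h₂ := fun s => (hderiv s).differentiableAt
    have hode₂ : ∀ s : ℝ, deriv h₂ s = h₂ s ^ 2 / m + lam := by
      intro s
      rw [(hderiv s).deriv, hode]
      simp [hh₂]
    exact riccati_aux m lam hm hlam h₂ hdiff₂ hode₂ (-t) (by simpa [hh₂] using h2)
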